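/- For every strict partition λ, q_1(λ) = |λ|; that is, Σ_{i=0}^{m} C(x_i,2) − Σ_{i=1}^{m} C(y_i,2) = |λ| (note C(x_0,2) = C(1,2) = 0). -/

import Mathlib

open scoped BigOperators

/-- A strict partition: a strictly decreasing list of positive integers. -/
structure StrictPartition where
  parts : List ℕ
  pos : ∀ p ∈ parts, 0 < p
  sorted : parts.Pairwise (· > ·)

namespace StrictPartition

/-- The `i`-th part (1-indexed); `0` for `i` beyond the length. -/
def part (lam : StrictPartition) (i : ℕ) : ℕ := lam.parts.getD (i - 1) 0

/-- The size `|λ|` of a strict partition. -/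
def size (lam : StrictPartition) : ℕ := lam.parts.sum

/-- The length `ℓ(λ)` (number of parts) of a strict partition. -/
def length (lam : StrictPartition) : ℕ := lam.parts.length

/-- The cells of the shifted Young diagram: row `i` occupies columns `i+1, …, i+λᵢ`. -/
def cells (lam : StrictPartition) : Finset (ℕ × ℕ) :=
  (Finset.range (lam.size + lam.length + 2) ×ˢ
      Finset.range (lam.size + lam.length + 2)).filter
    (fun b => 1 ≤ b.1 ∧ b.1 < b.2 ∧ b.2 ≤ b.1 + lam.part b.1)

/-- The content of a box `(i,j)` is `j - i`. -/
def content (b : ℕ × ℕ) : ℕ := b.2 - b.1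

/-- The hook length of a box `(i,j)`: the number of boxes strictly below it in its
column, plus the number strictly to its right in its row, plus `1`, plus `λ_j`. -/
def hook (lam : StrictPartition) (b : ℕ × ℕ) : ℕ :=
  (lam.cells.filter (fun b' => b'.2 = b.2 ∧ b.1 < b'.1)).card +
  (lam.cells.filter (fun b' => b'.1 = b.1 ∧ b.2 < b'.2)).card + 1 + lam.part b.2

/-- `H_λ`, the product of the hook lengths of all boxes of `λ`. -/
def H (lam : StrictPartition) : ℕ := ∏ b ∈ lam.cells, lam.hook b

/-- `μ ≤ λ` iff `μᵢ ≤ λᵢ` for all `i`. -/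
instance : LE StrictPartition := ⟨fun mu lam => ∀ i, mu.part i ≤ lam.part i⟩

/-- The cells of the skew shifted diagram `λ/μ`. -/
def skewCells (mu lam : StrictPartition) : Finset (ℕ × ℕ) := lam.cells \ mu.cells

/-- `f_{λ/μ}`: the number of standard shifted Young tableaux of skew shape `λ/μ`,
i.e. bijective fillings of the cells of `λ/μ` with `0, 1, …, n-1` increasing along
rows and columns. -/
noncomputable def fskew (mu lam : StrictPartition) : ℕ :=
  Nat.card {T : {b // b ∈ skewCells mu lam} → Fin (skewCells mu lam).card //
    Function.Bijective T ∧
    (∀ a b : {b // b ∈ skewCells mu lam},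
      (a : ℕ × ℕ).1 = (b : ℕ × ℕ).1 → (a : ℕ × ℕ).2 < (b : ℕ × ℕ).2 → T a < T b) ∧
    (∀ a b : {b // b ∈ skewCells mu lam},
      (a : ℕ × ℕ).2 = (b : ℕ × ℕ).2 → (a : ℕ × ℕ).1 < (b : ℕ × ℕ).1 → T a < T b)}

/-- The empty strict partition. -/
def empty : StrictPartition := ⟨[], by simp, List.Pairwise.nil⟩

/-- `f_λ`: the number of standard shifted Young tableaux of shape `λ`. -/
noncomputable def f (lam : StrictPartition) : ℕ := fskew empty lam

/-- `f'_{λ/μ} = 2^{|λ|-|μ|-ℓ(λ)+ℓ(μ)} f_{λ/μ}`. -/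
noncomputable def fPrime (mu lam : StrictPartition) : ℚ :=
  (2 : ℚ) ^ ((lam.size : ℤ) - mu.size - lam.length + mu.length) * fskew mu lam

/-- `λ⁺` is obtained from `λ` by adding one box. -/
def AddBox (lam lam' : StrictPartition) : Prop := lam ≤ lam' ∧ lam'.size = lam.size + 1

/-- The difference operator `D` for strict partitions. -/
noncomputable def D (g : StrictPartition → ℚ) (lam : StrictPartition) : ℚ :=
  (∑ᶠ nu ∈ {nu : StrictPartition | lam.AddBox nu ∧ lam.length < nu.length}, g nu) +
  2 * (∑ᶠ nu ∈ {nu : StrictPartition | lam.AddBox nu ∧ nu.length = lam.length}, g nu) -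
  g lam

/-- The boxes that can be removed from `λ` leaving (the diagram of) a strict
partition: the outer corners. -/
def removableCells (lam : StrictPartition) : Set (ℕ × ℕ) :=
  {b | b ∈ lam.cells ∧ ∃ mu : StrictPartition, mu.cells = lam.cells.erase b}

/-- The boxes that can be added to `λ` giving (the diagram of) a strict partition. -/
def addableCells (lam : StrictPartition) : Set (ℕ × ℕ) :=
  {b | b ∉ lam.cells ∧ ∃ mu : StrictPartition, mu.cells = insert b lam.cells}

/-- The contents `x_0 = 1 < x_1 < ⋯ < x_m` of the inner corners of `λ`. -/
def innerContents (lam : StrictPartition) : Set ℕ :=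
  insert 1 (content '' lam.addableCells)

/-- The contents `y_1 < ⋯ < y_m` of the outer corners of `λ`. -/
def outerContents (lam : StrictPartition) : Set ℕ :=
  content '' lam.removableCells

/-- `q_k(λ) = ∑_{i=0}^m C(xᵢ,2)^k − ∑_{i=1}^m C(yᵢ,2)^k`. -/
noncomputable def q (k : ℕ) (lam : StrictPartition) : ℚ :=
  (∑ᶠ c ∈ lam.innerContents, ((c.choose 2 : ℚ)) ^ k) -
  (∑ᶠ c ∈ lam.outerContents, ((c.choose 2 : ℚ)) ^ k)

/-- `q_ν(λ) = ∏_j q_{ν_j}(λ)` for a partition `ν` given as a multiset of parts. -/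
noncomputable def qPart (nu : Multiset ℕ) (lam : StrictPartition) : ℚ :=
  (nu.map (fun k => q k lam)).prod

end StrictPartition
namespace StrictPartition
variable (lam : StrictPartition)

lemma part_mem {i : ℕ} (h : 0 < lam.part i) : lam.part i ∈ lam.parts := by
  unfold part at *
  rcases lt_or_ge (i-1) lam.parts.length with hl | hl
  · rw [List.getD_eq_getElem _ _ hl]; exact List.getElem_mem _
  · rw [List.getD_eq_default _ _ hl] at h; omega

lemma part_le_length {i : ℕ} (h : 0 < lam.part i) : i - 1 < lam.parts.length := by
  by_contra hl
  rw [part, List.getD_eq_default _ _ (by omega)] at h; omega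

lemma part_strict {i j : ℕ} (h1 : 1 ≤ i) (hij : i < j) (hj : 0 < lam.part j) :
    lam.part j < lam.part i := by
  have hlj := lam.part_le_length hj
  have hli : i - 1 < lam.parts.length := by omega
  have := List.pairwise_iff_getElem.1 lam.sorted (i-1) (j-1) hli hlj (by omega)
  rw [part, part, List.getD_eq_getElem _ _ hli, List.getD_eq_getElem _ _ hlj]
  exact this

lemma part_mono {i j : ℕ} (h1 : 1 ≤ i) (hij : i ≤ j) : lam.part j ≤ lam.part i := by
  rcases eq_or_lt_of_le hij with rfl | h
  · exact le_refl _
  · rcases Nat.eq_zero_or_pos (lam.part j) with h0 | h0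
    · omega
    · exact le_of_lt (lam.part_strict h1 h h0)

lemma exists_part {a : ℕ} (h : a ∈ lam.parts) : ∃ i, 1 ≤ i ∧ lam.part i = a := by
  obtain ⟨k, hk, hke⟩ := List.getElem_of_mem h
  exact ⟨k+1, by omega, by rw [part, Nat.add_sub_cancel, List.getD_eq_getElem _ _ hk, hke]⟩

lemma mem_cells {b : ℕ × ℕ} :
    b ∈ lam.cells ↔ 1 ≤ b.1 ∧ b.1 < b.2 ∧ b.2 ≤ b.1 + lam.part b.1 := by
  unfold cells
  simp only [Finset.mem_filter, Finset.mem_product, Finset.mem_range]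
  constructor
  · tauto
  · rintro ⟨h1, h2, h3⟩
    have hp : 0 < lam.part b.1 := by omega
    have hlen : b.1 - 1 < lam.parts.length := lam.part_le_length hp
    have hsum : lam.part b.1 ≤ lam.parts.sum :=
      List.single_le_sum (fun x _ => Nat.zero_le x) _ (lam.part_mem hp)
    have : lam.size = lam.parts.sum := rfl
    have : lam.length = lam.parts.length := rfl
    refine ⟨⟨by omega, by omega⟩, h1, h2, h3⟩

end StrictPartition
namespace StrictPartition
variable {lam mu : StrictPartition}

lemma part_inj {i j : ℕ} (hi : 1 ≤ i) (hj : 1 ≤ j) (hp : 0 < lam.part i)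
    (he : lam.part i = lam.part j) : i = j := by
  rcases lt_trichotomy i j with h | h | h
  · have := lam.part_strict hi h (by omega); omega
  · exact h
  · have := lam.part_strict hj h hp; omega

lemma cells_erase_of_parts {r y : ℕ}
    (h : ∀ i, 1 ≤ i → mu.part i = if i = r then y - 1 else lam.part i)
    (hr : 1 ≤ r) (hy : lam.part r = y) (hy1 : 1 ≤ y) :
    mu.cells = lam.cells.erase (r, r + y) := by
  ext ⟨a, c⟩
  rw [Finset.mem_erase, mem_cells, mem_cells]
  simp only [ne_eq, Prod.mk.injEq]
  rcases Nat.lt_or_ge a 1 with ha0 | ha0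
  · omega
  · have hma := h a ha0
    split at hma
    · rename_i heq; subst heq; omega
    · omega

lemma cells_insert_of_parts {r : ℕ}
    (h : ∀ i, 1 ≤ i → mu.part i = if i = r then lam.part r + 1 else lam.part i)
    (hr : 1 ≤ r) :
    mu.cells = insert (r, r + lam.part r + 1) lam.cells := by
  ext ⟨a, c⟩
  rw [Finset.mem_insert, mem_cells, mem_cells]
  simp only [Prod.mk.injEq]
  rcases Nat.lt_or_ge a 1 with ha0 | ha0
  · omega
  · have hma := h a ha0
    split at hma
    · rename_i heq; subst heq; omega
    · omega

lemma parts_of_cells_erase {b : ℕ × ℕ} (h : mu.cells = lam.cells.erase b)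
    (hb : b ∈ lam.cells) :
    b.2 = b.1 + lam.part b.1 ∧ mu.part b.1 = lam.part b.1 - 1 ∧
      ∀ i, 1 ≤ i → i ≠ b.1 → mu.part i = lam.part i := by
  have key : ∀ a c : ℕ, (1 ≤ a ∧ a < c ∧ c ≤ a + mu.part a) ↔
      (¬(a = b.1 ∧ c = b.2) ∧ (1 ≤ a ∧ a < c ∧ c ≤ a + lam.part a)) := by
    intro a c
    have := Finset.ext_iff.1 h (a, c)
    rw [Finset.mem_erase, mem_cells, mem_cells] at this
    simpa [Prod.ext_iff] using this
  have hb' := (mem_cells _).1 hb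
  have k1 := key b.1 (b.1 + lam.part b.1)
  have k2 := key b.1 b.2
  have k3 := key b.1 (b.1 + mu.part b.1)
  have k4 := key b.1 (b.1 + lam.part b.1 - 1)
  refine ⟨by omega, by omega, fun i hi hne => ?_⟩
  have k5 := key i (i + lam.part i)
  have k6 := key i (i + mu.part i)
  omega

lemma parts_of_cells_insert {b : ℕ × ℕ} (h : mu.cells = insert b lam.cells)
    (hb : b ∉ lam.cells) :
    1 ≤ b.1 ∧ b.2 = b.1 + lam.part b.1 + 1 ∧ mu.part b.1 = lam.part b.1 + 1 ∧
      ∀ i, 1 ≤ i → i ≠ b.1 → mu.part i = lam.part i := by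
  have key : ∀ a c : ℕ, (1 ≤ a ∧ a < c ∧ c ≤ a + mu.part a) ↔
      ((a = b.1 ∧ c = b.2) ∨ (1 ≤ a ∧ a < c ∧ c ≤ a + lam.part a)) := by
    intro a c
    have := Finset.ext_iff.1 h (a, c)
    rw [Finset.mem_insert, mem_cells, mem_cells] at this
    simpa [Prod.ext_iff] using this
  have hb' : ¬(1 ≤ b.1 ∧ b.1 < b.2 ∧ b.2 ≤ b.1 + lam.part b.1) := fun hc => hb ((mem_cells _).2 hc)
  have k1 := key b.1 b.2
  have k2 := key b.1 (b.1 + mu.part b.1)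
  have k3 := key b.1 (b.2 - 1)
  refine ⟨by omega, by omega, by omega, fun i hi hne => ?_⟩
  have k5 := key i (i + lam.part i)
  have k6 := key i (i + mu.part i)
  omega

end StrictPartition
namespace StrictPartition
variable {lam : StrictPartition}

lemma remove_construct {r : ℕ} (hr : 1 ≤ r) (hy1 : 1 ≤ lam.part r)
    (hy' : lam.part r - 1 ∉ lam.parts) :
    ∃ mu : StrictPartition, ∀ i, 1 ≤ i →
      mu.part i = if i = r then lam.part r - 1 else lam.part i := by
  set y := lam.part r with hy
  have hlen : r - 1 < lam.parts.length := lam.part_le_length hy1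
  rcases Nat.lt_or_ge y 2 with hy2 | hy2
  · -- y = 1 : drop the last element
    have hy1' : y = 1 := by omega
    -- r is the last index
    have hrlast : r = lam.parts.length := by
      by_contra hne
      have hr' : r < lam.parts.length := by omega
      have hpos : 0 < lam.part (lam.parts.length) := by
        rw [part, List.getD_eq_getElem _ _ (by omega)]
        exact lam.pos _ (List.getElem_mem _)
      have := lam.part_strict hr (by omega : r < lam.parts.length) hpos
      omega
    refine ⟨⟨lam.parts.dropLast, fun p hp => lam.pos p ((List.dropLast_sublist _).subset hp),
        lam.sorted.sublist (List.dropLast_sublist _)⟩, fun i hi => ?_⟩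
    show lam.parts.dropLast.getD (i-1) 0 = _
    rcases Nat.lt_or_ge (i-1) (lam.parts.length - 1) with hil | hil
    · rw [List.getD_eq_getElem _ _ (by simpa using hil), List.getElem_dropLast,
        if_neg (by omega)]
      rw [part, List.getD_eq_getElem _ _ (by omega)]
    · rw [List.getD_eq_default _ _ (by simpa using hil)]
      by_cases hir : i = r
      · rw [if_pos hir]; omega
      · rw [if_neg hir, part, List.getD_eq_default _ _ (by omega)]
  · -- y ≥ 2 : replace y by y - 1
    set f : ℕ → ℕ := fun a => if a = y then y - 1 else a with hf
    have hsort : (lam.parts.map f).Pairwise (· > ·) := by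
      rw [List.pairwise_map]
      refine lam.sorted.imp_of_mem (fun {a b} ha hb hab => ?_)
      have ha' : 0 < a := lam.pos a ha
      have hb' : 0 < b := lam.pos b hb
      have hba : b ≠ y - 1 := fun h => hy' (h ▸ hb)
      have hay : a ≠ y - 1 := fun h => hy' (h ▸ ha)
      simp only [hf]
      split <;> split <;> omega
    refine ⟨⟨lam.parts.map f, fun p hp => ?_, hsort⟩, fun i hi => ?_⟩
    · obtain ⟨a, ha, rfl⟩ := List.mem_map.1 hp
      have := lam.pos a ha
      simp only [hf]; split <;> omega
    · show (lam.parts.map f).getD (i-1) 0 = _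
      rcases Nat.lt_or_ge (i-1) lam.parts.length with hil | hil
      · rw [List.getD_eq_getElem _ _ (by simpa using hil), List.getElem_map]
        by_cases hir : i = r
        · subst hir
          have : lam.parts[i-1] = y := by
            rw [hy, part, List.getD_eq_getElem _ _ hil]
          rw [this, if_pos rfl, hf]; simp
        · have hne : lam.parts[i-1] ≠ y := by
            intro he
            have : lam.part i = lam.part r := by
              rw [part, List.getD_eq_getElem _ _ hil, he, hy]
            exact hir (part_inj hi hr (by rw [this]; omega) this)
          rw [if_neg hir, hf]; simp only [if_neg hne]
          rw [part, List.getD_eq_getElem _ _ hil]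
      · rw [List.getD_eq_default _ _ (by simpa using hil)]
        rw [if_neg (by omega : ¬ i = r), part, List.getD_eq_default _ _ hil]

end StrictPartition
namespace StrictPartition
variable {lam : StrictPartition}

lemma add_construct {r : ℕ} (hr : 1 ≤ r) (hx : lam.part r + 1 ∉ lam.parts)
    (hcase : 0 < lam.part r ∨ r = lam.parts.length + 1) :
    ∃ mu : StrictPartition, ∀ i, 1 ≤ i →
      mu.part i = if i = r then lam.part r + 1 else lam.part i := by
  set y := lam.part r with hy
  rcases hcase with hpos | hlast
  · -- interior addition: replace y by y + 1
    have hlen : r - 1 < lam.parts.length := lam.part_le_length hpos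
    set g : ℕ → ℕ := fun a => if a = y then a + 1 else a with hg
    have hsort : (lam.parts.map g).Pairwise (· > ·) := by
      rw [List.pairwise_map]
      refine lam.sorted.imp_of_mem (fun {a b} ha hb hab => ?_)
      have ha' : a ≠ y + 1 := fun h => hx (h ▸ ha)
      have hb' : b ≠ y + 1 := fun h => hx (h ▸ hb)
      simp only [hg]
      split <;> split <;> omega
    refine ⟨⟨lam.parts.map g, fun p hp => ?_, hsort⟩, fun i hi => ?_⟩
    · obtain ⟨a, ha, rfl⟩ := List.mem_map.1 hp
      have := lam.pos a ha
      simp only [hg]; split <;> omega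
    · show (lam.parts.map g).getD (i-1) 0 = _
      rcases Nat.lt_or_ge (i-1) lam.parts.length with hil | hil
      · rw [List.getD_eq_getElem _ _ (by simpa using hil), List.getElem_map]
        by_cases hir : i = r
        · subst hir
          have hgy : lam.parts[i-1] = y := by
            rw [hy, part, List.getD_eq_getElem _ _ hil]
          rw [if_pos rfl, hg]; simp [hgy]
        · have hne : lam.parts[i-1] ≠ y := by
            intro he
            have h2 : lam.part i = lam.part r := by
              rw [part, List.getD_eq_getElem _ _ hil, he, hy]
            exact hir (part_inj hi hr (by rw [h2]; omega) h2)
          rw [if_neg hir, hg]; simp only [if_neg hne]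
          rw [part, List.getD_eq_getElem _ _ hil]
      · rw [List.getD_eq_default _ _ (by simpa using hil)]
        rw [if_neg (by omega : ¬ i = r), part, List.getD_eq_default _ _ hil]
  · -- new row of length 1 at the end
    have hy0 : y = 0 := by
      rw [hy, part, List.getD_eq_default _ _ (by omega)]
    have h1 : (1 : ℕ) ∉ lam.parts := by rwa [hy0] at hx
    have hsort : (lam.parts ++ [1]).Pairwise (· > ·) := by
      rw [List.pairwise_append]
      refine ⟨lam.sorted, List.pairwise_singleton _ _, fun a ha b hb => ?_⟩
      have := lam.pos a ha
      have : a ≠ 1 := fun h => h1 (h ▸ ha)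
      simp only [List.mem_singleton] at hb
      omega
    refine ⟨⟨lam.parts ++ [1], fun p hp => ?_, hsort⟩, fun i hi => ?_⟩
    · rcases List.mem_append.1 hp with h | h
      · exact lam.pos p h
      · simp only [List.mem_singleton] at h; omega
    · show (lam.parts ++ [1]).getD (i-1) 0 = _
      rcases Nat.lt_or_ge (i-1) lam.parts.length with hil | hil
      · rw [List.getD_eq_getElem _ _ (by simp; omega), List.getElem_append_left hil,
          if_neg (by omega : ¬ i = r), part, List.getD_eq_getElem _ _ hil]
      · rcases Nat.lt_or_ge (i-1) (lam.parts.length + 1) with hil2 | hil2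
        · have hir : i = r := by omega
          rw [List.getD_eq_getElem _ _ (by simpa using hil2),
            List.getElem_append_right hil, if_pos hir, hy0]
          simp
        · rw [List.getD_eq_default _ _ (by simpa using hil2),
            if_neg (by omega : ¬ i = r), part, List.getD_eq_default _ _ (by omega)]

end StrictPartition
namespace StrictPartition
variable {lam : StrictPartition}

lemma outerContents_eq :
    lam.outerContents = {y : ℕ | y ∈ lam.parts ∧ y - 1 ∉ lam.parts} := by
  ext y
  simp only [outerContents, removableCells, Set.mem_image, Set.mem_setOf_eq]
  constructor
  · rintro ⟨b, ⟨hb, mu, hmu⟩, rfl⟩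
    obtain ⟨h2, h3, h4⟩ := parts_of_cells_erase hmu hb
    have hb' := (mem_cells _).1 hb
    have hcont : content b = lam.part b.1 := by
      unfold content; omega
    have hypos : 0 < lam.part b.1 := by omega
    rw [hcont]
    refine ⟨lam.part_mem hypos, fun hmem => ?_⟩
    obtain ⟨j, hj1, hj2⟩ := exists_part lam hmem
    have hjpos : 0 < lam.part j := by rw [hj2]; exact lam.pos _ hmem
    have hjb : b.1 < j := by
      by_contra hc
      have := lam.part_mono hj1 (by omega : j ≤ b.1)
      omega
    have hmono := lam.part_mono (by omega : 1 ≤ b.1 + 1) (by omega : b.1 + 1 ≤ j)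
    have hmu1 : mu.part (b.1 + 1) = lam.part (b.1 + 1) := h4 _ (by omega) (by omega)
    have hstrict := mu.part_strict (by omega : 1 ≤ b.1) (by omega : b.1 < b.1 + 1)
      (by omega : 0 < mu.part (b.1 + 1))
    omega
  · rintro ⟨hmem, hnot⟩
    obtain ⟨r, hr, hry⟩ := exists_part lam hmem
    have hypos : 0 < y := lam.pos y hmem
    obtain ⟨mu, hmu⟩ := remove_construct (lam := lam) hr (by omega) (by rwa [hry])
    have hbmem : ((r, r + y) : ℕ × ℕ) ∈ lam.cells := by
      simp only [mem_cells]; omega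
    refine ⟨(r, r + y), ⟨hbmem, mu, ?_⟩, ?_⟩
    · have := cells_erase_of_parts (lam := lam) (mu := mu) (r := r) (y := y)
        (by intro i hi; rw [hmu i hi, hry]) hr hry (by omega)
      exact this
    · unfold content; omega

lemma innerContents_eq :
    lam.innerContents = insert 1 {x : ℕ | 2 ≤ x ∧ x - 1 ∈ lam.parts ∧ x ∉ lam.parts} := by
  ext x
  simp only [innerContents, addableCells, Set.mem_insert_iff, Set.mem_image, Set.mem_setOf_eq]
  constructor
  · rintro (rfl | ⟨b, ⟨hb, mu, hmu⟩, rfl⟩)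
    · exact Or.inl rfl
    · obtain ⟨h1, h2, h3, h4⟩ := parts_of_cells_insert hmu hb
      have hcont : content b = lam.part b.1 + 1 := by unfold content; omega
      rcases Nat.eq_zero_or_pos (lam.part b.1) with h0 | h0
      · exact Or.inl (by rw [hcont, h0])
      · refine Or.inr ⟨by omega, ?_, ?_⟩
        · rw [hcont]; simpa using lam.part_mem h0
        · rw [hcont]
          intro hmem
          obtain ⟨j, hj1, hj2⟩ := exists_part lam hmem
          have hjb : j < b.1 := by
            by_contra hc
            have := lam.part_mono h1 (by omega : b.1 ≤ j)
            omega
          have hb2 : 2 ≤ b.1 := by omega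
          have hmono := lam.part_mono hj1 (by omega : j ≤ b.1 - 1)
          have hstr := lam.part_strict (by omega : 1 ≤ b.1 - 1) (by omega : b.1 - 1 < b.1) h0
          have heq : lam.part (b.1 - 1) = lam.part b.1 + 1 := by omega
          have hmu1 : mu.part (b.1 - 1) = lam.part (b.1 - 1) := h4 _ (by omega) (by omega)
          have hstrict := mu.part_strict (by omega : 1 ≤ b.1 - 1) (by omega : b.1 - 1 < b.1)
            (by omega : 0 < mu.part b.1)
          omega
  · rintro (rfl | ⟨hx2, hmem, hnot⟩)
    · -- x = 1 : add a new row of length 1 at the end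
      refine Or.inl rfl
    · obtain ⟨r, hr, hry⟩ := exists_part lam hmem
      have hypos : 0 < x - 1 := lam.pos _ hmem
      obtain ⟨mu, hmu⟩ := add_construct (lam := lam) hr (by rw [hry]; intro hc; exact hnot (by
        have : x - 1 + 1 = x := by omega
        rwa [this] at hc)) (Or.inl (by omega))
      refine Or.inr ⟨(r, r + lam.part r + 1), ⟨?_, mu, cells_insert_of_parts hmu hr⟩, ?_⟩
      · simp only [mem_cells]; omega
      · unfold content; rw [hry]; omega

end StrictPartition
lemma key_sum (S : Finset ℕ) (hS : ∀ y ∈ S, 1 ≤ y) :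
    (∑ x ∈ insert 1 ((S.filter (fun y => y + 1 ∉ S)).image (· + 1)), (x.choose 2 : ℚ))
      - ∑ y ∈ S.filter (fun y => y - 1 ∉ S), (y.choose 2 : ℚ) = ∑ y ∈ S, (y : ℚ) := by
  classical
  have h1mem : (1 : ℕ) ∉ (S.filter (fun y => y + 1 ∉ S)).image (· + 1) := by
    simp only [Finset.mem_image, Finset.mem_filter]
    rintro ⟨y, ⟨hy, -⟩, hy1⟩
    have := hS y hy
    omega
  rw [Finset.sum_insert h1mem]
  have h10 : ((Nat.choose 1 2 : ℕ) : ℚ) = 0 := by norm_num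
  rw [h10, zero_add]
  rw [Finset.sum_image (by intro a _ b _ h; have h' : a + 1 = b + 1 := h; omega)]
  have hchoose : ∀ y : ℕ, (((y + 1).choose 2 : ℕ) : ℚ) = (y.choose 2 : ℚ) + y := by
    intro y
    have : (y + 1).choose 2 = y.choose 1 + y.choose 2 := Nat.choose_succ_succ y 1
    rw [this, Nat.choose_one_right]
    push_cast; ring
  have hsum : ∑ y ∈ S, (((y + 1).choose 2 : ℕ) : ℚ)
      = (∑ y ∈ S, (y.choose 2 : ℚ)) + ∑ y ∈ S, (y : ℚ) := by
    rw [← Finset.sum_add_distrib]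
    exact Finset.sum_congr rfl (fun y _ => hchoose y)
  have hbij : ∑ y ∈ S.filter (fun y => ¬ (y + 1 ∉ S)), (((y + 1).choose 2 : ℕ) : ℚ)
      = ∑ y ∈ S.filter (fun y => ¬ (y - 1 ∉ S)), ((y.choose 2 : ℕ) : ℚ) := by
    refine Finset.sum_nbij' (fun y => y + 1) (fun z => z - 1) ?_ ?_ ?_ ?_ ?_
    · intro a ha
      simp only [Finset.mem_filter, not_not] at ha ⊢
      exact ⟨ha.2, by simpa using ha.1⟩
    · intro z hz
      simp only [Finset.mem_filter, not_not] at hz ⊢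
      have h1 := hS _ hz.2
      refine ⟨hz.2, ?_⟩
      have h2 := hz.1
      rwa [(by omega : z - 1 + 1 = z)]
    · intro a ha; show a + 1 - 1 = a; omega
    · intro z hz
      simp only [Finset.mem_filter, not_not] at hz
      have := hS _ hz.1
      show z - 1 + 1 = z
      omega
    · intro a ha; rfl
  have e1 := Finset.sum_filter_add_sum_filter_not S (fun y => y + 1 ∉ S)
    (fun y => (((y + 1).choose 2 : ℕ) : ℚ))
  have e2 := Finset.sum_filter_add_sum_filter_not S (fun y => y - 1 ∉ S)
    (fun y => ((y.choose 2 : ℕ) : ℚ))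
  linarith [hsum, e1, e2, hbij]

open StrictPartition in
/-- Lemma 4.2. -/
theorem statement18 (lam : StrictPartition) : q 1 lam = lam.size := by
  classical
  have hnodup : lam.parts.Nodup := lam.sorted.imp (fun h => ne_of_gt h)
  have houter : lam.outerContents
      = ↑(lam.parts.toFinset.filter (fun y => y - 1 ∉ lam.parts.toFinset)) := by
    rw [outerContents_eq]
    ext y
    simp [List.mem_toFinset]
  have hinner : lam.innerContents
      = ↑(insert 1 ((lam.parts.toFinset.filter
          (fun y => y + 1 ∉ lam.parts.toFinset)).image (· + 1))) := by
    rw [innerContents_eq]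
    ext x
    simp only [Set.mem_insert_iff, Set.mem_setOf_eq, Finset.coe_insert, Finset.coe_image,
      Finset.coe_filter, List.mem_toFinset, Set.mem_image]
    constructor
    · rintro (rfl | ⟨hx2, h1, h2⟩)
      · exact Or.inl rfl
      · exact Or.inr ⟨x - 1, ⟨h1, by rwa [(by omega : x - 1 + 1 = x)]⟩, by omega⟩
    · rintro (rfl | ⟨y, ⟨h1, h2⟩, rfl⟩)
      · exact Or.inl rfl
      · have := lam.pos y h1
        exact Or.inr ⟨by omega, by simpa using h1, h2⟩
  rw [q, houter, hinner, finsum_mem_coe_finset, finsum_mem_coe_finset]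
  simp only [pow_one]
  rw [key_sum _ (fun y hy => lam.pos y (List.mem_toFinset.1 hy))]
  have : (lam.size : ℚ) = ((lam.parts.sum : ℕ) : ℚ) := rfl
  rw [this, Nat.cast_list_sum]
  rw [List.sum_toFinset _ hnodup]
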